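/- In the plane ℝ², set B₁ = {p | p.1 > 0}, B₂ = {p | p.2 > 0}, C = {p | p.1 < 0 ∧ p.2 < 0}, and A = interior(ℝ² ∖ C). Then: (i) A = B₁ ∪ B₂; (ii) interior((ℝ² ∖ A) ∪ (B₁ ∪ B₂)) = ℝ²; (iii) interior((ℝ² ∖ A) ∪ B₁) = {p | p.1 > 0 ∨ p.2 < 0}; (iv) interior((ℝ² ∖ A) ∪ B₂) = {p | p.1 < 0 ∨ p.2 > 0}; consequently interior((ℝ² ∖ A) ∪ B₁) ∪ interior((ℝ² ∖ A) ∪ B₂) = ℝ² ∖ {(0,0)} ≠ ℝ². (This refutes the Kreisel–Putnam principle in the Tarski topological model over ℝ², where implication is interpreted by S → T ↦ interior((X ∖ S) ∪ T).) -/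

import Mathlib

private lemma ball_mem (p q : ℝ × ℝ) (ε : ℝ) (h1 : |q.1 - p.1| < ε)
    (h2 : |q.2 - p.2| < ε) : q ∈ Metric.ball p ε := by
  rw [Metric.mem_ball, Prod.dist_eq]
  refine max_lt ?_ ?_ <;> simpa [Real.dist_eq] using ‹_›

private lemma int_ub {S : Set (ℝ × ℝ)} (p : ℝ × ℝ) (hp : p ∈ interior S)
    (h : ∀ ε > (0:ℝ), ∃ q ∈ Metric.ball p ε, q ∉ S) : False := by
  rw [mem_interior_iff_mem_nhds, Metric.mem_nhds_iff] at hp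
  obtain ⟨ε, hε, hsub⟩ := hp
  obtain ⟨q, hq, hqS⟩ := h ε hε
  exact hqS (hsub hq)

theorem stmt_5 (B₁ B₂ C A : Set (ℝ × ℝ))
    (hB₁ : B₁ = {p | 0 < p.1}) (hB₂ : B₂ = {p | 0 < p.2})
    (hC : C = {p | p.1 < 0 ∧ p.2 < 0}) (hA : A = interior Cᶜ) :
    A = B₁ ∪ B₂ ∧
    interior (Aᶜ ∪ (B₁ ∪ B₂)) = Set.univ ∧
    interior (Aᶜ ∪ B₁) = {p | 0 < p.1 ∨ p.2 < 0} ∧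
    interior (Aᶜ ∪ B₂) = {p | p.1 < 0 ∨ 0 < p.2} ∧
    interior (Aᶜ ∪ B₁) ∪ interior (Aᶜ ∪ B₂) = ({((0 : ℝ), (0 : ℝ))}ᶜ : Set (ℝ × ℝ)) ∧
    ({((0 : ℝ), (0 : ℝ))}ᶜ : Set (ℝ × ℝ)) ≠ Set.univ := by
  have o1 : IsOpen {p : ℝ × ℝ | 0 < p.1} := isOpen_lt continuous_const continuous_fst
  have o2 : IsOpen {p : ℝ × ℝ | 0 < p.2} := isOpen_lt continuous_const continuous_snd
  have o1' : IsOpen {p : ℝ × ℝ | p.1 < 0} := isOpen_lt continuous_fst continuous_const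
  have o2' : IsOpen {p : ℝ × ℝ | p.2 < 0} := isOpen_lt continuous_snd continuous_const
  -- (i)
  have hA' : A = B₁ ∪ B₂ := by
    subst hA hB₁ hB₂ hC
    apply le_antisymm
    · intro p hp
      by_contra hcon
      simp only [Set.mem_union, Set.mem_setOf_eq, not_or, not_lt] at hcon
      obtain ⟨h1, h2⟩ := hcon
      refine int_ub p hp (fun ε hε => ⟨(p.1 - ε/2, p.2 - ε/2), ?_, ?_⟩)
      · exact ball_mem _ _ _ (by dsimp only; rw [abs_lt]; constructor <;> linarith) (by dsimp only; rw [abs_lt]; constructor <;> linarith)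
      · simp only [Set.mem_compl_iff, Set.mem_setOf_eq, not_not]
        constructor <;> linarith
    · apply interior_maximal
      · intro p hp
        simp only [Set.mem_union, Set.mem_setOf_eq] at hp
        simp only [Set.mem_compl_iff, Set.mem_setOf_eq, not_and, not_lt]
        rcases hp with h | h <;> intro h' <;> linarith
      · exact o1.union o2
  have h3 : interior (Aᶜ ∪ B₁) = {p : ℝ × ℝ | 0 < p.1 ∨ p.2 < 0} := by
    rw [hA', hB₁, hB₂]
    apply le_antisymm
    · intro p hp
      by_contra hcon
      simp only [Set.mem_setOf_eq, not_or, not_lt] at hcon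
      obtain ⟨h1, h2⟩ := hcon
      refine int_ub p hp (fun ε hε => ⟨(p.1 - ε/2, p.2 + ε/2), ?_, ?_⟩)
      · exact ball_mem _ _ _ (by dsimp only; rw [abs_lt]; constructor <;> linarith) (by dsimp only; rw [abs_lt]; constructor <;> linarith)
      · simp only [Set.mem_union, Set.mem_compl_iff, Set.mem_setOf_eq, not_or, not_not, not_lt]
        refine ⟨fun hh => ?_, by linarith⟩
        linarith [hh.1, hh.2]
    · apply interior_maximal
      · intro p hp
        simp only [Set.mem_setOf_eq] at hp
        simp only [Set.mem_union, Set.mem_compl_iff, Set.mem_setOf_eq, not_or, not_lt]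
        rcases hp with h | h
        · right; exact h
        · rcases le_or_gt p.1 0 with h' | h'
          · left; exact ⟨h', le_of_lt h⟩
          · right; exact h'
      · exact o1.union o2'
  have h4 : interior (Aᶜ ∪ B₂) = {p : ℝ × ℝ | p.1 < 0 ∨ 0 < p.2} := by
    rw [hA', hB₁, hB₂]
    apply le_antisymm
    · intro p hp
      by_contra hcon
      simp only [Set.mem_setOf_eq, not_or, not_lt] at hcon
      obtain ⟨h1, h2⟩ := hcon
      refine int_ub p hp (fun ε hε => ⟨(p.1 + ε/2, p.2 - ε/2), ?_, ?_⟩)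
      · exact ball_mem _ _ _ (by dsimp only; rw [abs_lt]; constructor <;> linarith) (by dsimp only; rw [abs_lt]; constructor <;> linarith)
      · simp only [Set.mem_union, Set.mem_compl_iff, Set.mem_setOf_eq, not_or, not_not, not_lt]
        refine ⟨fun hh => ?_, by linarith⟩
        linarith [hh.1, hh.2]
    · apply interior_maximal
      · intro p hp
        simp only [Set.mem_setOf_eq] at hp
        simp only [Set.mem_union, Set.mem_compl_iff, Set.mem_setOf_eq, not_or, not_lt]
        rcases hp with h | h
        · rcases le_or_gt p.2 0 with h' | h'
          · left; exact ⟨le_of_lt h, h'⟩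
          · right; exact h'
        · right; exact h
      · exact o1'.union o2
  refine ⟨hA', ?_, h3, h4, ?_, ?_⟩
  · rw [hA', Set.compl_union_self, interior_univ]
  · rw [h3, h4]
    ext p
    simp only [Set.mem_union, Set.mem_setOf_eq, Set.mem_compl_iff, Set.mem_singleton_iff,
      Prod.ext_iff]
    constructor
    · rintro h ⟨e1, e2⟩
      rcases h with (h | h) | (h | h) <;> simp_all
    · intro h
      rcases lt_trichotomy p.1 0 with h1 | h1 | h1
      · right; left; exact h1
      · rcases lt_trichotomy p.2 0 with h2 | h2 | h2
        · left; right; exact h2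
        · exact absurd ⟨h1, h2⟩ h
        · right; right; exact h2
      · left; left; exact h1
  · intro h
    have : ((0:ℝ), (0:ℝ)) ∈ ({((0 : ℝ), (0 : ℝ))}ᶜ : Set (ℝ × ℝ)) :=
      h.symm ▸ Set.mem_univ _
    exact this rfl
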